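/- Let n ≥ 2 and let a, b, c, d be pairwise distinct points of ℝⁿ such that a, b, c are not collinear. Then the set {a, b, c, d} is concyclic if and only if the four vectors (a, 1, |a|²), (b, 1, |b|²), (c, 1, |c|²), (d, 1, |d|²) of ℝⁿ × ℝ × ℝ span a linear subspace of dimension at most 3 (equivalently, (d, 1, |d|²) lies in the span of the other three). That is, a net x in ℝⁿ is circular in the Euclidean sense exactly when its Möbius-geometric lifts x̂ = (x, 1, |x|²) form a Q-net (have planar quadrilaterals) in the projective model of Möbius geometry. -/

import Mathlib

open EuclideanGeometry

section Aux

variable {E : Type*} [NormedAddCommGroup E] [InnerProductSpace ℝ E]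

/-- A point on a sphere satisfies a linear relation in its Möbius lift coordinates. -/
lemma sphere_lift_eq {x p : E} {r : ℝ} (h : dist x p = r) :
    ‖x‖ ^ 2 = 2 * (inner ℝ x p : ℝ) + (r ^ 2 - ‖p‖ ^ 2) := by
  have h2 : ‖x - p‖ ^ 2 = r ^ 2 := by rw [← dist_eq_norm, h]
  have h3 := norm_sub_sq_real x p
  linarith [h3 ▸ h2]

/-- Converse: the linear relation implies membership in the sphere. -/
lemma dist_eq_of_lift_eq {x p : (EuclideanSpace ℝ (Fin n))} {r : ℝ} (hr : 0 ≤ r)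
    (h : ‖x‖ ^ 2 = 2 * (inner ℝ x p : ℝ) + (r ^ 2 - ‖p‖ ^ 2)) : dist x p = r := by
  have h3 := norm_sub_sq_real x p
  have h2 : dist x p ^ 2 = r ^ 2 := by rw [dist_eq_norm]; linarith
  have h4 : (dist x p - r) * (dist x p + r) = 0 := by nlinarith
  rcases mul_eq_zero.mp h4 with h5 | h5
  · linarith
  · have := dist_nonneg (x := x) (y := p)
    linarith

end Aux

/-- **Circularity is equivalent to planarity of the Möbius lifts.**
For pairwise distinct points `a, b, c, d` of ℝⁿ (`n ≥ 2`) with `a, b, c` not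
collinear, the set `{a, b, c, d}` is concyclic if and only if the Möbius-geometric
lifts `x̂ = (x, 1, |x|²)` of the four points span a linear subspace of
`ℝⁿ × ℝ × ℝ` of dimension at most 3. -/
theorem concyclic_iff_moebius_lifts_planar
    (n : ℕ) (hn : 2 ≤ n) (a b c d : EuclideanSpace ℝ (Fin n))
    (hab : a ≠ b) (hac : a ≠ c) (had : a ≠ d) (hbc : b ≠ c) (hbd : b ≠ d)
    (hcd : c ≠ d)
    (hcol : ¬ Collinear ℝ ({a, b, c} : Set (EuclideanSpace ℝ (Fin n)))) :
    Concyclic ({a, b, c, d} : Set (EuclideanSpace ℝ (Fin n))) ↔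
      Module.finrank ℝ
        ↥(Submodule.span ℝ
          ({(a, 1, ‖a‖ ^ 2), (b, 1, ‖b‖ ^ 2), (c, 1, ‖c‖ ^ 2), (d, 1, ‖d‖ ^ 2)} :
            Set (EuclideanSpace ℝ (Fin n) × ℝ × ℝ))) ≤ 3 := by
  classical
  have haff : AffineIndependent ℝ ![a, b, c] :=
    affineIndependent_iff_not_collinear_set.2 hcol
  have hrange3 : Set.range ![a, b, c] = ({a, b, c} : Set (EuclideanSpace ℝ (Fin n))) := by
    ext x
    simp [Matrix.range_cons, Matrix.range_empty]
    tauto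
  set La : (EuclideanSpace ℝ (Fin n)) × ℝ × ℝ := (a, 1, ‖a‖ ^ 2) with hLa
  set Lb : (EuclideanSpace ℝ (Fin n)) × ℝ × ℝ := (b, 1, ‖b‖ ^ 2) with hLb
  set Lc : (EuclideanSpace ℝ (Fin n)) × ℝ × ℝ := (c, 1, ‖c‖ ^ 2) with hLc
  set Ld : (EuclideanSpace ℝ (Fin n)) × ℝ × ℝ := (d, 1, ‖d‖ ^ 2) with hLd
  have hLrange : Set.range ![La, Lb, Lc, Ld] = ({La, Lb, Lc, Ld} : Set ((EuclideanSpace ℝ (Fin n)) × ℝ × ℝ)) := by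
    ext x
    simp [Matrix.range_cons, Matrix.range_empty]
    tauto
  -- the key claim: membership of `Ld` in the span of the other lifts is equivalent
  constructor
  · rintro ⟨⟨p, r, hsph⟩, hcop⟩
    -- the four points are on the sphere
    have hA := sphere_lift_eq (hsph a (by simp))
    have hB := sphere_lift_eq (hsph b (by simp))
    have hC := sphere_lift_eq (hsph c (by simp))
    have hD := sphere_lift_eq (hsph d (by simp))
    -- `d` is in the affine span of `a, b, c`
    have h3eq : Module.finrank ℝ ↥(vectorSpan ℝ ({a, b, c} : Set (EuclideanSpace ℝ (Fin n)))) = 2 := by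
      have := haff.finrank_vectorSpan (n := 2) (by simp)
      rwa [hrange3] at this
    have hsub : ({a, b, c} : Set (EuclideanSpace ℝ (Fin n))) ⊆ ({a, b, c, d} : Set (EuclideanSpace ℝ (Fin n))) := by
      intro x hx
      simp only [Set.mem_insert_iff, Set.mem_singleton_iff] at hx ⊢
      tauto
    have hvle : vectorSpan ℝ ({a, b, c} : Set (EuclideanSpace ℝ (Fin n))) ≤ vectorSpan ℝ ({a, b, c, d} : Set (EuclideanSpace ℝ (Fin n))) :=
      vectorSpan_mono ℝ hsub
    have hveq : vectorSpan ℝ ({a, b, c} : Set (EuclideanSpace ℝ (Fin n))) = vectorSpan ℝ ({a, b, c, d} : Set (EuclideanSpace ℝ (Fin n))) :=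
      Submodule.eq_of_le_of_finrank_le hvle
        (by rw [h3eq]; exact coplanar_iff_finrank_le_two.mp hcop)
    have hAeq : affineSpan ℝ ({a, b, c} : Set (EuclideanSpace ℝ (Fin n))) = affineSpan ℝ ({a, b, c, d} : Set (EuclideanSpace ℝ (Fin n))) := by
      apply AffineSubspace.ext_of_direction_eq
      · rw [direction_affineSpan, direction_affineSpan, hveq]
      · exact ⟨a, subset_affineSpan ℝ _ (by simp), subset_affineSpan ℝ _ (by simp)⟩
    have hd_mem : d ∈ affineSpan ℝ (Set.range ![a, b, c]) := by
      rw [hrange3, hAeq]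
      exact subset_affineSpan ℝ _ (by simp)
    obtain ⟨w, hw, hwd⟩ := eq_affineCombination_of_mem_affineSpan_of_fintype hd_mem
    have hd_comb : d = w 0 • a + w 1 • b + w 2 • c := by
      rw [hwd, Finset.affineCombination_eq_linear_combination _ _ _ hw]
      simp [Fin.sum_univ_three]
    rw [Fin.sum_univ_three] at hw
    -- hence `Ld` is in the span of the other lifts
    have hinner : (inner ℝ d p : ℝ) = w 0 * inner ℝ a p + w 1 * inner ℝ b p + w 2 * inner ℝ c p := by
      rw [hd_comb, inner_add_left, inner_add_left, real_inner_smul_left,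
        real_inner_smul_left, real_inner_smul_left]
    have hnorm : ‖d‖ ^ 2 = w 0 * ‖a‖ ^ 2 + w 1 * ‖b‖ ^ 2 + w 2 * ‖c‖ ^ 2 := by
      rw [hD]
      linear_combination 2 * hinner - w 0 * hA - w 1 * hB - w 2 * hC -
        (r ^ 2 - ‖p‖ ^ 2) * hw
    have hLd_mem : Ld ∈ Submodule.span ℝ ({La, Lb, Lc} : Set ((EuclideanSpace ℝ (Fin n)) × ℝ × ℝ)) := by
      have : Ld = w 0 • La + w 1 • Lb + w 2 • Lc := by
        rw [hLa, hLb, hLc, hLd, Prod.smul_mk, Prod.smul_mk, Prod.smul_mk,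
          Prod.smul_mk, Prod.smul_mk, Prod.smul_mk, Prod.mk_add_mk, Prod.mk_add_mk,
          Prod.mk_add_mk, Prod.mk_add_mk]
        simp only [Prod.mk.injEq, smul_eq_mul]
        exact ⟨hd_comb, ⟨by linarith [hw], hnorm⟩⟩
      rw [this]
      refine Submodule.add_mem _ (Submodule.add_mem _ ?_ ?_) ?_ <;>
        exact Submodule.smul_mem _ _ (Submodule.subset_span (by simp))
    have hspan_le : Submodule.span ℝ ({La, Lb, Lc, Ld} : Set ((EuclideanSpace ℝ (Fin n)) × ℝ × ℝ)) ≤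
        Submodule.span ℝ ({La, Lb, Lc} : Set ((EuclideanSpace ℝ (Fin n)) × ℝ × ℝ)) := by
      rw [Submodule.span_le]
      intro x hx
      simp only [Set.mem_insert_iff, Set.mem_singleton_iff] at hx
      rcases hx with rfl | rfl | rfl | rfl
      · exact Submodule.subset_span (by simp)
      · exact Submodule.subset_span (by simp)
      · exact Submodule.subset_span (by simp)
      · exact hLd_mem
    refine le_trans (Submodule.finrank_mono hspan_le) ?_
    refine le_trans (finrank_span_le_card _) ?_
    rw [Set.toFinset_insert, Set.toFinset_insert, Set.toFinset_singleton]
    refine le_trans (Finset.card_insert_le _ _) ?_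
    have := Finset.card_insert_le Lb ({Lc} : Finset ((EuclideanSpace ℝ (Fin n)) × ℝ × ℝ))
    simp at this ⊢
    omega
  · intro hrank
    -- the four lifts are linearly dependent
    have hnotli : ¬ LinearIndependent ℝ ![La, Lb, Lc, Ld] := by
      intro hli
      have := finrank_span_eq_card hli
      rw [hLrange] at this
      rw [this] at hrank
      simp at hrank
    obtain ⟨g, hg, i, hgi⟩ := Fintype.not_linearIndependent_iff.mp hnotli
    rw [Fin.sum_univ_four] at hg
    simp only [Matrix.cons_val_zero, Matrix.cons_val_one, Matrix.head_cons,
      Matrix.cons_val_two, Matrix.tail_cons, Matrix.cons_val_three, hLa, hLb, hLc, hLd,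
      Prod.smul_mk, Prod.mk_add_mk, Prod.mk_eq_zero, smul_eq_mul] at hg
    obtain ⟨h1, h2, h3⟩ := hg
    -- the coefficient of `Ld` cannot vanish
    have hg3 : g 3 ≠ 0 := by
      intro hg3
      rw [hg3] at h1 h2
      have hz : ∀ e ∈ (Finset.univ : Finset (Fin 3)), (![g 0, g 1, g 2]) e = 0 := by
        refine affineIndependent_iff.mp haff Finset.univ ![g 0, g 1, g 2] ?_ ?_
        · rw [Fin.sum_univ_three]; simpa using h2
        · rw [Fin.sum_univ_three]; simpa using h1
      have hz0 := hz 0 (by simp)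
      have hz1 := hz 1 (by simp)
      have hz2 := hz 2 (by simp)
      simp at hz0 hz1 hz2
      fin_cases i <;> simp_all
    -- express `d` as an affine combination of `a, b, c`
    obtain ⟨α, hα⟩ : ∃ x : ℝ, x = -((g 3)⁻¹ * g 0) := ⟨_, rfl⟩
    obtain ⟨β, hβ⟩ : ∃ x : ℝ, x = -((g 3)⁻¹ * g 1) := ⟨_, rfl⟩
    obtain ⟨γ, hγ⟩ : ∃ x : ℝ, x = -((g 3)⁻¹ * g 2) := ⟨_, rfl⟩
    have hd_comb : d = α • a + β • b + γ • c := by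
      have h4 : g 3 • d = -(g 0 • a + g 1 • b + g 2 • c) := by
        rw [eq_neg_iff_add_eq_zero, add_comm]
        exact h1
      rw [← inv_smul_smul₀ hg3 d, h4]
      match_scalars
      · rw [hα]; field_simp
      · rw [hβ]; field_simp
      · rw [hγ]; field_simp
    have hsum : α + β + γ = 1 := by
      rw [hα, hβ, hγ]
      field_simp
      linear_combination (-1) * h2
    have hnorm : ‖d‖ ^ 2 = α * ‖a‖ ^ 2 + β * ‖b‖ ^ 2 + γ * ‖c‖ ^ 2 := by
      rw [hα, hβ, hγ]
      field_simp
      linear_combination h3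
    constructor
    · -- cospherical: use the circumsphere of the triangle `a b c`
      let s : Affine.Simplex ℝ (EuclideanSpace ℝ (Fin n)) 2 := ⟨![a, b, c], haff⟩
      obtain ⟨p, r, hA, hB, hC⟩ : ∃ (p : EuclideanSpace ℝ (Fin n)) (r : ℝ),
          dist a p = r ∧ dist b p = r ∧ dist c p = r := by
        refine ⟨s.circumcenter, s.circumradius, ?_, ?_, ?_⟩
        · exact s.dist_circumcenter_eq_circumradius 0
        · exact s.dist_circumcenter_eq_circumradius 1
        · exact s.dist_circumcenter_eq_circumradius 2
      have hr0 : 0 ≤ r := hA ▸ dist_nonneg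
      have hA' := sphere_lift_eq hA
      have hB' := sphere_lift_eq hB
      have hC' := sphere_lift_eq hC
      have hinner : (inner ℝ d p : ℝ) = α * inner ℝ a p + β * inner ℝ b p + γ * inner ℝ c p := by
        rw [hd_comb, inner_add_left, inner_add_left, real_inner_smul_left,
          real_inner_smul_left, real_inner_smul_left]
      have hD : dist d p = r := by
        apply dist_eq_of_lift_eq hr0
        linear_combination hnorm - 2 * hinner + α * hA' + β * hB' + γ * hC' +
          (r ^ 2 - ‖p‖ ^ 2) * hsum
      refine ⟨p, r, ?_⟩
      intro x hx
      simp only [Set.mem_insert_iff, Set.mem_singleton_iff] at hx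
      rcases hx with rfl | rfl | rfl | rfl <;> assumption
    · -- coplanar
      have hd_mem : d ∈ affineSpan ℝ ({a, b, c} : Set (EuclideanSpace ℝ (Fin n))) := by
        rw [← hrange3]
        have hw : ∑ i, (![α, β, γ]) i = 1 := by rw [Fin.sum_univ_three]; simpa using hsum
        have := affineCombination_mem_affineSpan (s := Finset.univ) hw ![a, b, c]
        rw [Finset.affineCombination_eq_linear_combination _ _ _ hw,
          Fin.sum_univ_three] at this
        simp only [Matrix.cons_val_zero, Matrix.cons_val_one, Matrix.head_cons,
          Matrix.cons_val_two, Matrix.tail_cons] at this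
        rwa [← hd_comb] at this
      have hle : affineSpan ℝ ({a, b, c, d} : Set (EuclideanSpace ℝ (Fin n))) ≤ affineSpan ℝ ({a, b, c} : Set (EuclideanSpace ℝ (Fin n))) := by
        rw [affineSpan_le]
        intro x hx
        simp only [Set.mem_insert_iff, Set.mem_singleton_iff] at hx
        rcases hx with rfl | rfl | rfl | rfl
        · exact subset_affineSpan ℝ _ (by simp)
        · exact subset_affineSpan ℝ _ (by simp)
        · exact subset_affineSpan ℝ _ (by simp)
        · exact hd_mem
      rw [coplanar_iff_finrank_le_two]
      have hvle : vectorSpan ℝ ({a, b, c, d} : Set (EuclideanSpace ℝ (Fin n))) ≤ vectorSpan ℝ ({a, b, c} : Set (EuclideanSpace ℝ (Fin n))) := by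
        rw [← direction_affineSpan, ← direction_affineSpan]
        exact AffineSubspace.direction_le hle
      refine le_trans (Submodule.finrank_mono hvle) ?_
      have := haff.finrank_vectorSpan (n := 2) (by simp)
      rw [hrange3] at this
      rw [this]
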